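/- In a pseudo-tensor category 𝒟, an object X is faithful (i.e., X ⊗ − : 𝒟 → 𝒟 is a faithful functor) if and only if the evaluation ev_X : X⁰ ⊗ X → 𝟙 is an epimorphism. -/

import Mathlib

open CategoryTheory CategoryTheory.Limits CategoryTheory.MonoidalCategory

universe v u

/-- A morphism `f` is split if there is `g` with `f ∘ g ∘ f = f`. -/
def IsSplit {C : Type u} [Category.{v} C] {X Y : C} (f : X ⟶ Y) : Prop :=
  ∃ g : Y ⟶ X, f ≫ g ≫ f = f

/-- The sequence `X₂ ⟶ X₁ ⟶ X₀ ⟶ 0` is exact, i.e. `q` is a cokernel of `p`. -/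
def IsCokernelSeq {C : Type u} [Category.{v} C] [Preadditive C] {X₂ X₁ X₀ : C}
    (p : X₂ ⟶ X₁) (q : X₁ ⟶ X₀) : Prop :=
  p ≫ q = 0 ∧ ∀ ⦃A : C⦄ (h : X₁ ⟶ A), p ≫ h = 0 → ∃! t : X₀ ⟶ A, q ≫ t = h

/-- The sequence `0 ⟶ X₀ ⟶ X₁ ⟶ X₂` is exact, i.e. `i` is a kernel of `p`. -/
def IsKernelSeq {C : Type u} [Category.{v} C] [Preadditive C] {X₀ X₁ X₂ : C}
    (i : X₀ ⟶ X₁) (p : X₁ ⟶ X₂) : Prop :=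
  i ≫ p = 0 ∧ ∀ ⦃A : C⦄ (h : A ⟶ X₁), h ≫ p = 0 → ∃! t : A ⟶ X₀, t ≫ i = h

/-- The morphism `ℰ_X = ev_X ⊗ id_{X⁰⊗X} − id_{X⁰⊗X} ⊗ ev_X`. -/
def calE {C : Type u} [Category.{v} C] [Preadditive C] [MonoidalCategory C]
    (X Xd : C) [ExactPairing X Xd] : (Xd ⊗ X) ⊗ (Xd ⊗ X) ⟶ Xd ⊗ X :=
  (ε_ X Xd ▷ (Xd ⊗ X)) ≫ (λ_ (Xd ⊗ X)).hom -
    ((Xd ⊗ X) ◁ ε_ X Xd) ≫ (ρ_ (Xd ⊗ X)).hom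

/-- `X` (with chosen dual `Xd`) is strongly faithful: `ev_X` is the cokernel of `ℰ_X`. -/
def StronglyFaithful {C : Type u} [Category.{v} C] [Preadditive C]
    [MonoidalCategory C] (X Xd : C) [ExactPairing X Xd] : Prop :=
  IsCokernelSeq (calE X Xd) (ε_ X Xd)

/-- In a pseudo-tensor category, `X ⊗ −` is a faithful functor iff the
evaluation `ev_X : X⁰ ⊗ X ⟶ 𝟙` is an epimorphism. -/
theorem stmt9 {k : Type*} [Field k] {C : Type u} [Category.{v} C] [Preadditive C]
    [Linear k C] [MonoidalCategory C] [SymmetricCategory C] [MonoidalPreadditive C]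
    [MonoidalLinear k C] [RigidCategory C] [IsIdempotentComplete C]
    (hEnd : Function.Bijective fun a : k => a • (𝟙 (𝟙_ C)))
    (X Xd : C) [ExactPairing X Xd] :
    (tensorLeft X).Faithful ↔ Epi (ε_ X Xd) := by
  constructor
  · intro hF
    apply Preadditive.epi_of_cancel_zero
    intro A f hf
    have hz : X ◁ f = 0 := by
      have key : (λ_ X).inv ≫ η_ X Xd ▷ X ≫ (α_ X Xd X).hom ≫ X ◁ (ε_ X Xd ≫ f)
          = (ρ_ X).inv ≫ X ◁ f := by
        rw [MonoidalCategory.whiskerLeft_comp]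
        slice_lhs 2 4 => rw [ExactPairing.evaluation_coevaluation]
        simp
      rw [hf, MonoidalPreadditive.whiskerLeft_zero, comp_zero, comp_zero, comp_zero] at key
      have := congrArg (fun t => (ρ_ X).hom ≫ t) key.symm
      simpa using this
    exact hF.map_injective (show (tensorLeft X).map f = (tensorLeft X).map 0 by
      simpa [tensorLeft] using hz)
  · intro hε
    constructor
    intro A B f g hfg
    have hz : X ◁ (f - g) = 0 := by
      have h : X ◁ f = X ◁ g := hfg
      have : (tensorLeft X).map (f - g) = 0 := by
        rw [Functor.map_sub]
        simpa [tensorLeft] using sub_eq_zero.mpr h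
      simpa [tensorLeft] using this
    have hz2 : (Xd ⊗ X) ◁ (f - g) = 0 := by
      have h3 : (Xd ⊗ X) ◁ (f - g)
          = (α_ Xd X A).hom ≫ Xd ◁ (X ◁ (f - g)) ≫ (α_ Xd X B).inv := by simp
      rw [h3, hz, MonoidalPreadditive.whiskerLeft_zero, zero_comp, comp_zero]
    have hεA : Epi (ε_ X Xd ▷ A) := by
      haveI : (tensorRight A).PreservesEpimorphisms :=
        Functor.preservesEpimorphisms_of_adjunction (tensorRightAdjunction A (Aᘁ))
      exact (tensorRight A).map_epi (ε_ X Xd)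
    have key : (ε_ X Xd ▷ A) ≫ (𝟙_ C ◁ (f - g)) = 0 := by
      rw [← whisker_exchange, hz2, zero_comp]
    have h1 : 𝟙_ C ◁ (f - g) = 0 := by
      rw [← cancel_epi (ε_ X Xd ▷ A), key, comp_zero]
    have h2 : f - g = 0 := by
      have : (λ_ A).inv ≫ 𝟙_ C ◁ (f - g) ≫ (λ_ B).hom = f - g := by simp
      rw [h1] at this
      simpa using this.symm
    exact sub_eq_zero.mp h2
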